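/- In a vertical configuration of lines a₁, …, a_N (ordered by slope, with the intersection of a₁ and a_N having strictly the largest y-coordinate among all pairwise intersections), if a₁, a_{i₂}, …, a_{i_{n-1}} form an (n-1)-cup starting with a₁, then a₁, a_{i₂}, …, a_{i_{n-1}}, a_N are n lines in convex position. -/

import Mathlib

open Set
/-- A non-vertical line in the plane represented by (slope, intercept). -/
def lineSet (l : ℝ × ℝ) : Set (ℝ × ℝ) := {p | p.2 = l.1 * p.1 + l.2}

/-- General position: pairwise distinct slopes (hence no two parallel, none vertical
by the representation) and no three concurrent. -/
def GenPos (F : Finset (ℝ × ℝ)) : Prop :=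
  (∀ l₁ ∈ F, ∀ l₂ ∈ F, l₁ ≠ l₂ → l₁.1 ≠ l₂.1) ∧
  (∀ l₁ ∈ F, ∀ l₂ ∈ F, ∀ l₃ ∈ F, l₁ ≠ l₂ → l₁ ≠ l₃ → l₂ ≠ l₃ →
    ¬ ∃ p, p ∈ lineSet l₁ ∧ p ∈ lineSet l₂ ∧ p ∈ lineSet l₃)

/-- Intersection point of two non-parallel lines. -/
noncomputable def interPt (l₁ l₂ : ℝ × ℝ) : ℝ × ℝ :=
  ((l₂.2 - l₁.2) / (l₁.1 - l₂.1),
   l₁.1 * ((l₂.2 - l₁.2) / (l₁.1 - l₂.1)) + l₁.2)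

/-- The point `p` lies strictly below the line `l` (the line is strictly above `p`). -/
def Below (p : ℝ × ℝ) (l : ℝ × ℝ) : Prop := p.2 < l.1 * p.1 + l.2

/-- The point `p` lies strictly above the line `l` (the line is strictly below `p`). -/
def Above (p : ℝ × ℝ) (l : ℝ × ℝ) : Prop := p.2 > l.1 * p.1 + l.2

/-- A sequence of lines ordered by strictly increasing slope forms a cup: each
intermediate line lies strictly above the intersection of its two neighbours. -/
def IsCup {k : ℕ} (a : Fin k → ℝ × ℝ) : Prop :=
  StrictMono (fun i => (a i).1) ∧
  ∀ i : Fin k, ∀ _h1 : 0 < (i : ℕ), ∀ h2 : (i : ℕ) + 1 < k,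
    Below (interPt (a ⟨(i : ℕ) - 1, by omega⟩) (a ⟨(i : ℕ) + 1, h2⟩)) (a i)

/-- A sequence of lines ordered by strictly increasing slope forms a cap: each
intermediate line lies strictly below the intersection of its two neighbours. -/
def IsCap {k : ℕ} (a : Fin k → ℝ × ℝ) : Prop :=
  StrictMono (fun i => (a i).1) ∧
  ∀ i : Fin k, ∀ _h1 : 0 < (i : ℕ), ∀ h2 : (i : ℕ) + 1 < k,
    Above (interPt (a ⟨(i : ℕ) - 1, by omega⟩) (a ⟨(i : ℕ) + 1, h2⟩)) (a i)

/-- `F` contains `k` lines forming a `k`-cup. -/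
def HasCup (k : ℕ) (F : Finset (ℝ × ℝ)) : Prop :=
  ∃ a : Fin k → ℝ × ℝ, (∀ i, a i ∈ F) ∧ IsCup a

/-- `F` contains `l` lines forming an `l`-cap. -/
def HasCap (l : ℕ) (F : Finset (ℝ × ℝ)) : Prop :=
  ∃ a : Fin l → ℝ × ℝ, (∀ i, a i ∈ F) ∧ IsCap a

/-- Union of the lines of a family. -/
def linesUnion (F : Finset (ℝ × ℝ)) : Set (ℝ × ℝ) := ⋃ l ∈ F, lineSet l

/-- `P` is a cell of the arrangement of `F`: a connected component of the
complement of the union of the lines. -/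
def IsCellOf (F : Finset (ℝ × ℝ)) (P : Set (ℝ × ℝ)) : Prop :=
  ∃ p ∈ (linesUnion F)ᶜ, P = connectedComponentIn (linesUnion F)ᶜ p

/-- The line `l` contributes a (positive length) segment to the boundary of `P`:
the closure of `P` meets `l` in more than one point. -/
def Contributes (l : ℝ × ℝ) (P : Set (ℝ × ℝ)) : Prop :=
  ∃ p q : ℝ × ℝ, p ≠ q ∧ p ∈ closure P ∩ lineSet l ∧ q ∈ closure P ∩ lineSet l

/-- `P` is a cell of the arrangement of `F` with a boundary segment on every line of `F`. -/
def IsNCell (F : Finset (ℝ × ℝ)) (P : Set (ℝ × ℝ)) : Prop :=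
  IsCellOf F P ∧ ∀ l ∈ F, Contributes l P

/-- The lines of `F` are in convex position: they define a cell bounded by all of them. -/
def ConvexPos (F : Finset (ℝ × ℝ)) : Prop := ∃ P, IsNCell F P

def fE (l : ℝ × ℝ) (x : ℝ) : ℝ := l.1 * x + l.2

noncomputable def xI (l₁ l₂ : ℝ × ℝ) : ℝ := (l₂.2 - l₁.2) / (l₁.1 - l₂.1)

lemma diffE (l₁ l₂ : ℝ × ℝ) (h : l₁.1 ≠ l₂.1) (x : ℝ) :
    fE l₂ x - fE l₁ x = (l₂.1 - l₁.1) * (x - xI l₁ l₂) := by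
  have h' : l₁.1 - l₂.1 ≠ 0 := sub_ne_zero.mpr h
  unfold fE xI
  field_simp
  ring

lemma ltA {l₁ l₂ : ℝ × ℝ} (h : l₁.1 < l₂.1) {x : ℝ} (hx : xI l₁ l₂ < x) :
    fE l₁ x < fE l₂ x := by
  have := diffE l₁ l₂ h.ne x; nlinarith

lemma gtA {l₁ l₂ : ℝ × ℝ} (h : l₁.1 < l₂.1) {x : ℝ} (hx : x < xI l₁ l₂) :
    fE l₂ x < fE l₁ x := by
  have := diffE l₁ l₂ h.ne x; nlinarith

lemma revA {l₁ l₂ : ℝ × ℝ} (h : l₁.1 < l₂.1) {x : ℝ} (hx : fE l₁ x < fE l₂ x) :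
    xI l₁ l₂ < x := by
  by_contra hc; push_neg at hc
  have := diffE l₁ l₂ h.ne x; nlinarith

lemma revA' {l₁ l₂ : ℝ × ℝ} (h : l₁.1 < l₂.1) {x : ℝ} (hx : fE l₂ x < fE l₁ x) :
    x < xI l₁ l₂ := by
  by_contra hc; push_neg at hc
  have := diffE l₁ l₂ h.ne x; nlinarith

lemma revle {l₁ l₂ : ℝ × ℝ} (h : l₁.1 < l₂.1) {x : ℝ} (hx : fE l₁ x ≤ fE l₂ x) :
    xI l₁ l₂ ≤ x := by
  by_contra hc; push_neg at hc
  have := diffE l₁ l₂ h.ne x; nlinarith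

lemma revle' {l₁ l₂ : ℝ × ℝ} (h : l₁.1 < l₂.1) {x : ℝ} (hx : fE l₂ x ≤ fE l₁ x) :
    x ≤ xI l₁ l₂ := by
  by_contra hc; push_neg at hc
  have := diffE l₁ l₂ h.ne x; nlinarith

lemma eqI {l₁ l₂ : ℝ × ℝ} (h : l₁.1 ≠ l₂.1) : fE l₂ (xI l₁ l₂) = fE l₁ (xI l₁ l₂) := by
  have := diffE l₁ l₂ h (xI l₁ l₂); simp at this; linarith

lemma interPt_fst (l₁ l₂ : ℝ × ℝ) : (interPt l₁ l₂).1 = xI l₁ l₂ := rfl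
lemma interPt_snd (l₁ l₂ : ℝ × ℝ) : (interPt l₁ l₂).2 = fE l₁ (xI l₁ l₂) := rfl

lemma mem_lineSet_iff {l p} : p ∈ lineSet l ↔ p.2 = fE l p.1 := Iff.rfl

lemma mem_closure_up {P : Set (ℝ × ℝ)} {x y δ : ℝ} (hδ : 0 < δ)
    (h : ∀ t : ℝ, 0 < t → t < δ → (x, y + t) ∈ P) : (x, y) ∈ closure P := by
  have hs : ({x} ×ˢ Ioo y (y + δ) : Set (ℝ × ℝ)) ⊆ P := by
    rintro ⟨u, v⟩ ⟨hu, hv⟩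
    simp only [mem_singleton_iff] at hu
    subst hu
    have := h (v - y) (by linarith [hv.1]) (by linarith [hv.2])
    have e : y + (v - y) = v := by ring
    rwa [e] at this
  refine closure_mono hs ?_
  rw [closure_prod_eq, closure_singleton, closure_Ioo (by linarith : y ≠ y + δ)]
  exact ⟨rfl, le_refl y, by linarith⟩

lemma mem_closure_down {P : Set (ℝ × ℝ)} {x y δ : ℝ} (hδ : 0 < δ)
    (h : ∀ t : ℝ, 0 < t → t < δ → (x, y - t) ∈ P) : (x, y) ∈ closure P := by
  have hs : ({x} ×ˢ Ioo (y - δ) y : Set (ℝ × ℝ)) ⊆ P := by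
    rintro ⟨u, v⟩ ⟨hu, hv⟩
    simp only [mem_singleton_iff] at hu
    subst hu
    have := h (y - v) (by linarith [hv.2]) (by linarith [hv.1])
    have e : y - (y - v) = v := by ring
    rwa [e] at this
  refine closure_mono hs ?_
  rw [closure_prod_eq, closure_singleton, closure_Ioo (by linarith : y - δ ≠ y)]
  exact ⟨rfl, by linarith, le_refl y⟩

lemma sign_const {C : Set (ℝ × ℝ)} (hC : IsPreconnected C) {g : ℝ × ℝ → ℝ}
    (hg : Continuous g) (h0 : ∀ p ∈ C, g p ≠ 0) {p₀ p : ℝ × ℝ}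
    (hp₀ : p₀ ∈ C) (hp : p ∈ C) (hpos : 0 < g p₀) : 0 < g p := by
  by_contra hle; push_neg at hle
  have hneg : g p < 0 := lt_of_le_of_ne hle (h0 p hp)
  have him : IsPreconnected (g '' C) := hC.image g hg.continuousOn
  have h0m : (0 : ℝ) ∈ Icc (g p) (g p₀) := ⟨le_of_lt hneg, le_of_lt hpos⟩
  obtain ⟨z, hz, hz0⟩ := him.Icc_subset (mem_image_of_mem g hp) (mem_image_of_mem g hp₀) h0m
  exact h0 z hz hz0

lemma convex_aboveL (l : ℝ × ℝ) : Convex ℝ {p : ℝ × ℝ | fE l p.1 < p.2} := by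
  have hl : IsLinearMap ℝ (fun p : ℝ × ℝ => l.1 * p.1 - p.2) := by
    constructor
    · intro p q; simp [Prod.fst_add, Prod.snd_add]; ring
    · intro c p; simp [Prod.smul_fst, Prod.smul_snd, smul_eq_mul]; ring
  have := convex_halfSpace_lt hl (-l.2)
  convert this using 1
  all_goals (ext p; simp only [fE, Set.mem_setOf_eq]; constructor <;> intro h <;> linarith)

lemma convex_belowL (l : ℝ × ℝ) : Convex ℝ {p : ℝ × ℝ | p.2 < fE l p.1} := by
  have hl : IsLinearMap ℝ (fun p : ℝ × ℝ => p.2 - l.1 * p.1) := by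
    constructor
    · intro p q; simp [Prod.fst_add, Prod.snd_add]; ring
    · intro c p; simp [Prod.smul_fst, Prod.smul_snd, smul_eq_mul]; ring
  have := convex_halfSpace_lt hl l.2
  convert this using 1
  all_goals (ext p; simp only [fE, Set.mem_setOf_eq]; constructor <;> intro h <;> linarith)

lemma isOpen_aboveL (l : ℝ × ℝ) : IsOpen {p : ℝ × ℝ | fE l p.1 < p.2} := by
  apply isOpen_lt _ continuous_snd
  exact (continuous_const.mul continuous_fst).add continuous_const

lemma isOpen_belowL (l : ℝ × ℝ) : IsOpen {p : ℝ × ℝ | p.2 < fE l p.1} := by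
  apply isOpen_lt continuous_snd
  exact (continuous_const.mul continuous_fst).add continuous_const

/-- In a vertical configuration, an (m)-cup starting with the line of smallest slope,
together with the line of largest slope, gives m + 1 lines in convex position. -/
theorem stmt16 (N m : ℕ) (hN : 2 ≤ N) (hm : 2 ≤ m)
    (a : Fin N → ℝ × ℝ) (hmono : StrictMono fun i => (a i).1)
    (hgp : GenPos (Finset.univ.image a))
    (hvert : ∀ i j : Fin N, i < j → ¬((i : ℕ) = 0 ∧ (j : ℕ) = N - 1) →
      (interPt (a i) (a j)).2 < (interPt (a ⟨0, by omega⟩) (a ⟨N - 1, by omega⟩)).2)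
    (c : Fin m → Fin N) (hc : StrictMono c) (hc0 : (c ⟨0, by omega⟩ : ℕ) = 0)
    (hclt : ∀ t : Fin m, (c t : ℕ) < N - 1)
    (hcup : IsCup (a ∘ c)) :
    (Finset.univ.image (a ∘ c) ∪ {a ⟨N - 1, by omega⟩}).card = m + 1 ∧
      ConvexPos (Finset.univ.image (a ∘ c) ∪ {a ⟨N - 1, by omega⟩}) := by
  have hNlt : N - 1 < N := by omega
  have h0N : 0 < N := by omega
  obtain ⟨L, hLdef⟩ : ∃ L, L = a ⟨N - 1, hNlt⟩ := ⟨_, rfl⟩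
  obtain ⟨bb, hbbdef⟩ : ∃ bb : ℕ → ℝ × ℝ, ∀ k (hk : k < m), bb k = a (c ⟨k, hk⟩) :=
    ⟨fun k => if hk : k < m then a (c ⟨k, hk⟩) else 0, fun k hk => by simp [hk]⟩
  -- slope facts
  have hsb : ∀ {k k' : ℕ}, k < k' → ∀ hk' : k' < m, (bb k).1 < (bb k').1 := by
    intro k k' hkk hk'
    rw [hbbdef k (hkk.trans hk'), hbbdef k' hk']
    exact hcup.1 (show (⟨k, hkk.trans hk'⟩ : Fin m) < ⟨k', hk'⟩ from Fin.mk_lt_mk.mpr hkk)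
  have hsL : ∀ k, ∀ hk : k < m, (bb k).1 < L.1 := by
    intro k hk
    rw [hbbdef k hk, hLdef]
    exact hmono (show c ⟨k, hk⟩ < ⟨N - 1, hNlt⟩ from Fin.lt_def.mpr (by simpa using hclt ⟨k, hk⟩))
  have hb0 : bb 0 = a ⟨0, h0N⟩ := by
    rw [hbbdef 0 (by omega)]
    exact congrArg a (Fin.ext hc0)
  obtain ⟨xq, hxqdef⟩ : ∃ x, x = xI (bb 0) L := ⟨_, rfl⟩
  obtain ⟨yq, hyqdef⟩ : ∃ y, y = (interPt (a ⟨0, h0N⟩) (a ⟨N - 1, hNlt⟩)).2 := ⟨_, rfl⟩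
  have hyq0 : yq = fE (bb 0) xq := by
    rw [hyqdef, ← hb0, ← hLdef, interPt_snd, hxqdef]
  have hyqL : fE L xq = yq := by
    rw [hyq0, hxqdef]; exact eqI (hsL 0 (by omega)).ne
  have hvert' : ∀ i j : Fin N, i < j → ¬((i : ℕ) = 0 ∧ (j : ℕ) = N - 1) →
      (interPt (a i) (a j)).2 < yq := by
    intro i j h1 h2
    rw [hyqdef]
    exact hvert i j h1 h2
  obtain ⟨xb, hxbdef⟩ : ∃ f : ℕ → ℝ, ∀ k, f k = xI (bb k) (bb (k + 1)) := ⟨_, fun _ => rfl⟩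
  -- breakpoints are increasing
  have XM : ∀ k, k + 2 < m → xb k < xb (k + 1) := by
    intro k hk
    have hcupk := hcup.2 ⟨k + 1, by omega⟩ (by simp) (by simpa using hk)
    simp only [Function.comp_apply] at hcupk
    unfold Below at hcupk
    rw [← hbbdef (k + 1 - 1) (by omega), ← hbbdef (k + 1 + 1) (by simpa using hk),
      ← hbbdef (k + 1) (by omega)] at hcupk
    have hcupk' : fE (bb k) (xI (bb k) (bb (k + 1 + 1))) <
        fE (bb (k + 1)) (xI (bb k) (bb (k + 1 + 1))) := by
      rw [interPt_snd, interPt_fst] at hcupk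
      exact hcupk
    have heq : fE (bb (k + 1 + 1)) (xI (bb k) (bb (k + 1 + 1)))
        = fE (bb k) (xI (bb k) (bb (k + 1 + 1))) :=
      eqI (hsb (by omega) (by omega)).ne
    have hlt1 : xb k < xI (bb k) (bb (k + 1 + 1)) := by
      rw [hxbdef]
      exact revA (hsb (by omega) (by omega)) hcupk'
    have hlt2 : xI (bb k) (bb (k + 1 + 1)) < xb (k + 1) := by
      rw [hxbdef]
      exact revA' (hsb (by omega) (by omega)) (by rw [heq]; exact hcupk')
    linarith
  have xbmono : ∀ k k', k ≤ k' → k' + 1 < m → xb k ≤ xb k' := by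
    intro k k'
    induction k' with
    | zero => intro h _; interval_cases k; exact le_refl _
    | succ n ih =>
      intro h hn
      rcases Nat.lt_or_ge k (n + 1) with h' | h'
      · have h1 : xb k ≤ xb n := ih (by omega) (by omega)
        have h2 : xb n < xb (n + 1) := XM n (by omega)
        linarith
      · have : k = n + 1 := by omega
        rw [this]
  -- envelope comparisons
  have E1 : ∀ j, j < m → ∀ i, i < j → ∀ x : ℝ, xb (j - 1) < x → fE (bb i) x < fE (bb j) x := by
    intro j
    induction j with
    | zero => intro _ i hi; omega
    | succ n ih =>
      intro hn i hi x hx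
      have hx' : xb n < x := by simpa using hx
      have hlast : fE (bb n) x < fE (bb (n + 1)) x := by
        refine ltA (hsb (by omega) hn) ?_
        rw [← hxbdef]; exact hx'
      rcases Nat.lt_or_ge i n with h' | h'
      · have hxn : xb (n - 1) < x := by
          have : xb (n - 1) ≤ xb n := xbmono _ _ (by omega) (by omega)
          linarith
        exact lt_trans (ih (by omega) i h' x hxn) hlast
      · have : i = n := by omega
        rw [this]; exact hlast
  have E2 : ∀ j, j < m → ∀ i, i < j → ∀ x : ℝ, x < xb i → fE (bb j) x < fE (bb i) x := by
    intro j
    induction j with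
    | zero => intro _ i hi; omega
    | succ n ih =>
      intro hn i hi x hx
      have hxn : x < xb n := by
        rcases Nat.lt_or_ge i n with h' | h'
        · have : xb i ≤ xb n := xbmono _ _ (by omega) (by omega)
          linarith
        · have : i = n := by omega
          rw [← this]; exact hx
      have hlast : fE (bb (n + 1)) x < fE (bb n) x := by
        refine gtA (hsb (by omega) hn) ?_
        rw [← hxbdef]; exact hxn
      rcases Nat.lt_or_ge i n with h' | h'
      · exact lt_trans hlast (ih (by omega) i h' x hx)
      · have : i = n := by omega
        rw [this]; exact hlast
  -- the apex q is strictly above all the other cup lines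
  have G1 : ∀ j, 0 < j → ∀ hj : j < m, fE (bb j) xq < yq := by
    intro j hj0 hj
    have hs0j : (bb 0).1 < (bb j).1 := hsb hj0 hj
    have hsjL : (bb j).1 < L.1 := hsL j hj
    have hcj0 : 0 < (c ⟨j, hj⟩ : ℕ) := by
      have := hc (show (⟨0, by omega⟩ : Fin m) < ⟨j, hj⟩ from Fin.mk_lt_mk.mpr hj0)
      rw [Fin.lt_def, hc0] at this
      exact this
    have hv1 : fE (bb j) (xI (bb 0) (bb j)) < yq := by
      have h := hvert' (c ⟨0, by omega⟩) (c ⟨j, hj⟩)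
        (hc (Fin.mk_lt_mk.mpr hj0))
        (by rintro ⟨-, h2⟩; have := hclt ⟨j, hj⟩; omega)
      rw [← hbbdef 0 (by omega), ← hbbdef j hj, interPt_snd] at h
      calc fE (bb j) (xI (bb 0) (bb j)) = fE (bb 0) (xI (bb 0) (bb j)) := eqI hs0j.ne
        _ < yq := h
    have hv2 : fE (bb j) (xI (bb j) L) < yq := by
      have h := hvert' (c ⟨j, hj⟩) ⟨N - 1, hNlt⟩
        (Fin.lt_def.mpr (by simpa using hclt ⟨j, hj⟩))
        (by rintro ⟨h1, -⟩; omega)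
      rw [← hbbdef j hj, ← hLdef, interPt_snd] at h
      exact h
    by_contra hcon
    push_neg at hcon
    have h1 : xI (bb 0) (bb j) ≤ xq := by
      refine revle hs0j ?_
      rw [← hyq0]; exact hcon
    have h2 : xq ≤ xI (bb j) L := by
      refine revle' hsjL ?_
      rw [hyqL]; exact hcon
    rcases le_or_gt 0 (bb j).1 with hA | hA
    · have : fE (bb j) xq ≤ fE (bb j) (xI (bb j) L) := by
        simp only [fE]
        nlinarith
      linarith
    · have : fE (bb j) xq ≤ fE (bb j) (xI (bb 0) (bb j)) := by
        simp only [fE]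
        nlinarith
      linarith
  -- every cup line meets L weakly left of q
  have hux : ∀ j, ∀ hj : j < m, xI (bb j) L ≤ xq := by
    intro j hj
    rcases Nat.eq_zero_or_pos j with h0 | h0
    · rw [h0, ← hxqdef]
    · refine revle (hsL j hj) ?_
      have := G1 j h0 hj
      rw [← hyqL] at this
      exact this.le
  have GKEY : ∀ j, ∀ hj : j < m, ∀ x : ℝ, xq < x → fE (bb j) x < fE L x := by
    intro j hj x hx
    exact ltA (hsL j hj) (lt_of_le_of_lt (hux j hj) hx)
  have hxq0 : xq < xb 0 := by
    have h := G1 1 (by omega) (by omega)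
    rw [hyq0] at h
    rw [hxbdef]
    exact revA' (hsb (by omega) (by omega)) h
  -- the cell
  obtain ⟨P, hPdef⟩ : ∃ P : Set (ℝ × ℝ),
      P = (⋂ k ∈ Finset.range m, {p : ℝ × ℝ | fE (bb k) p.1 < p.2}) ∩
        {p : ℝ × ℝ | p.2 < fE L p.1} := ⟨_, rfl⟩
  have hPmem : ∀ p : ℝ × ℝ, p ∈ P ↔ (∀ k, k < m → fE (bb k) p.1 < p.2) ∧ p.2 < fE L p.1 := by
    intro p
    rw [hPdef]
    simp [Set.mem_iInter, Finset.mem_range]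
  have hPopen : IsOpen P := by
    rw [hPdef]
    exact IsOpen.inter (isOpen_biInter_finset fun k _ => isOpen_aboveL (bb k))
      (isOpen_belowL L)
  have hPconv : Convex ℝ P := by
    rw [hPdef]
    exact Convex.inter (convex_iInter fun k => convex_iInter fun _ => convex_aboveL (bb k))
      (convex_belowL L)
  -- a base point
  obtain ⟨Mx, hMxdef⟩ : ∃ f : ℝ → ℝ, ∀ x,
      f x = (Finset.range m).sup' (by simp; omega) (fun k => fE (bb k) x) := ⟨_, fun _ => rfl⟩
  have hMx_lt : ∀ x : ℝ, xq < x → Mx x < fE L x := by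
    intro x hx
    rw [hMxdef]
    have h := Finset.sup'_lt_iff (s := Finset.range m) (f := fun k => fE (bb k) x)
      (a := fE L x) (by simp; omega)
    exact h.mpr fun k hk => GKEY k (Finset.mem_range.mp hk) x hx
  have hMx_ge : ∀ x : ℝ, ∀ k, ∀ hk : k < m, fE (bb k) x ≤ Mx x := by
    intro x k hk
    rw [hMxdef]
    exact Finset.le_sup' (fun k => fE (bb k) x) (Finset.mem_range.mpr hk)
  obtain ⟨p₀, hp₀def⟩ : ∃ p : ℝ × ℝ, p = (xq + 1, (Mx (xq + 1) + fE L (xq + 1)) / 2) := ⟨_, rfl⟩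
  have hp₀P : p₀ ∈ P := by
    rw [hPmem, hp₀def]
    have h := hMx_lt (xq + 1) (by linarith)
    constructor
    · intro k hk
      have := hMx_ge (xq + 1) k hk
      simp only []
      linarith
    · simp only []
      linarith
  -- key: for any finset with the right members, P is an n-cell
  have key : ∀ F : Finset (ℝ × ℝ),
      (∀ l, l ∈ F ↔ ((∃ k, ∃ _hk : k < m, l = bb k) ∨ l = L)) → IsNCell F P := by
    intro F hFmem
    have hPsubΩ : P ⊆ (linesUnion F)ᶜ := by
      intro p hp
      rw [hPmem] at hp
      intro hmem
      simp only [linesUnion, Set.mem_iUnion, lineSet, Set.mem_setOf_eq] at hmem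
      obtain ⟨l, hlF, hple⟩ := hmem
      rcases (hFmem l).1 hlF with ⟨k, hk, rfl⟩ | rfl
      · exact absurd hple (ne_of_gt (hp.1 k hk))
      · exact absurd hple (ne_of_lt hp.2)
    have hp₀Ω : p₀ ∈ (linesUnion F)ᶜ := hPsubΩ hp₀P
    constructor
    · -- IsCellOf
      refine ⟨p₀, hp₀Ω, ?_⟩
      apply Set.Subset.antisymm
      · exact IsPreconnected.subset_connectedComponentIn hPconv.isPreconnected hp₀P hPsubΩ
      · intro p hp
        have hC1 : IsPreconnected (connectedComponentIn (linesUnion F)ᶜ p₀) :=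
          isPreconnected_connectedComponentIn
        have hC2 : connectedComponentIn (linesUnion F)ᶜ p₀ ⊆ (linesUnion F)ᶜ :=
          connectedComponentIn_subset _ _
        have hC3 : p₀ ∈ connectedComponentIn (linesUnion F)ᶜ p₀ :=
          mem_connectedComponentIn hp₀Ω
        have hCoff : ∀ l, l ∈ F → ∀ z ∈ connectedComponentIn (linesUnion F)ᶜ p₀,
            z.2 ≠ fE l z.1 := by
          intro l hlF z hz hze
          have : z ∈ linesUnion F := by
            simp only [linesUnion, Set.mem_iUnion, lineSet, Set.mem_setOf_eq]
            exact ⟨l, hlF, hze⟩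
          exact hC2 hz this
        rw [hPmem]
        constructor
        · intro k hk
          have hcont : Continuous fun q : ℝ × ℝ => q.2 - ((bb k).1 * q.1 + (bb k).2) :=
            continuous_snd.sub ((continuous_const.mul continuous_fst).add continuous_const)
          have hne : ∀ z ∈ connectedComponentIn (linesUnion F)ᶜ p₀,
              (fun q : ℝ × ℝ => q.2 - ((bb k).1 * q.1 + (bb k).2)) z ≠ 0 := by
            intro z hz h0
            exact hCoff (bb k) ((hFmem (bb k)).2 (Or.inl ⟨k, hk, rfl⟩)) z hz
              (by simp only [fE]; linarith [sub_eq_zero.mp h0])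
          have hpos : 0 < (fun q : ℝ × ℝ => q.2 - ((bb k).1 * q.1 + (bb k).2)) p₀ := by
            have := ((hPmem p₀).1 hp₀P).1 k hk
            simp only [fE] at this
            simp only []
            linarith
          have := sign_const hC1 hcont hne hC3 hp hpos
          simp only [fE]
          linarith
        · have hcont : Continuous fun q : ℝ × ℝ => (L.1 * q.1 + L.2) - q.2 :=
            ((continuous_const.mul continuous_fst).add continuous_const).sub continuous_snd
          have hne : ∀ z ∈ connectedComponentIn (linesUnion F)ᶜ p₀,
              (fun q : ℝ × ℝ => (L.1 * q.1 + L.2) - q.2) z ≠ 0 := by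
            intro z hz h0
            exact hCoff L ((hFmem L).2 (Or.inr rfl)) z hz
              (by simp only [fE]; linarith [sub_eq_zero.mp h0])
          have hpos : 0 < (fun q : ℝ × ℝ => (L.1 * q.1 + L.2) - q.2) p₀ := by
            have := ((hPmem p₀).1 hp₀P).2
            simp only [fE] at this
            simp only []
            linarith
          have := sign_const hC1 hcont hne hC3 hp hpos
          simp only [fE]
          linarith
    · -- contributions
      intro l hlF
      rcases (hFmem l).1 hlF with ⟨k, hk, rfl⟩ | heq
      · -- a cup line
        have contrib_pt : ∀ x : ℝ, xq < x →
            (∀ k', k' < m → k' ≠ k → fE (bb k') x < fE (bb k) x) →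
            (x, fE (bb k) x) ∈ closure P ∩ lineSet (bb k) := by
          intro x hxq hother
          constructor
          · have hδ : 0 < fE L x - fE (bb k) x := by
              have := GKEY k hk x hxq
              linarith
            refine mem_closure_up hδ ?_
            intro t ht1 ht2
            rw [hPmem]
            constructor
            · intro k' hk'
              rcases eq_or_ne k' k with rfl | hne
              · simp only []
                linarith
              · have := hother k' hk' hne
                simp only []
                linarith
            · simp only []
              linarith
          · simp only [lineSet, Set.mem_setOf_eq, fE]
        -- choose two sample x values for line k
        obtain ⟨x₁, x₂, hx12, hgood₁, hgood₂⟩ : ∃ x₁ x₂ : ℝ, x₁ ≠ x₂ ∧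
            (xq < x₁ ∧ ∀ k', k' < m → k' ≠ k → fE (bb k') x₁ < fE (bb k) x₁) ∧
            (xq < x₂ ∧ ∀ k', k' < m → k' ≠ k → fE (bb k') x₂ < fE (bb k) x₂) := by
          rcases Nat.eq_zero_or_pos k with rfl | hkpos
          · -- k = 0 : interval (xq, xb 0)
            have hd : 0 < xb 0 - xq := by linarith
            refine ⟨xq + (xb 0 - xq) / 3, xq + 2 * (xb 0 - xq) / 3, by intro h; nlinarith, ?_, ?_⟩
            all_goals
              refine ⟨by linarith, ?_⟩
              intro k' hk' hne
              exact E2 k' hk' 0 (by omega) _ (by linarith)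
          rcases Nat.lt_or_ge (k + 1) m with hklt | hkge
          · -- 0 < k < m - 1 : interval (xb (k-1), xb k)
            have hdd : xb (k - 1) < xb k := by
              have := XM (k - 1) (by omega)
              have he : k - 1 + 1 = k := by omega
              rwa [he] at this
            have hq : xq < xb (k - 1) := by
              have := xbmono 0 (k - 1) (by omega) (by omega)
              linarith
            refine ⟨xb (k - 1) + (xb k - xb (k - 1)) / 3,
              xb (k - 1) + 2 * (xb k - xb (k - 1)) / 3, by intro h; nlinarith, ?_, ?_⟩
            all_goals
              refine ⟨by linarith, ?_⟩
              intro k' hk' hne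
              rcases Nat.lt_or_ge k' k with h' | h'
              · exact E1 k hk k' h' _ (by linarith)
              · have hgt : k < k' := by omega
                exact E2 k' hk' k hgt _ (by linarith)
          · -- k = m - 1 : interval (xb (m-2), ∞)
            have hkm : k = m - 1 := by omega
            have hq : xq < xb (k - 1) := by
              have := xbmono 0 (k - 1) (by omega) (by omega)
              linarith
            refine ⟨xb (k - 1) + 1, xb (k - 1) + 2, by intro h; nlinarith, ?_, ?_⟩
            all_goals
              refine ⟨by linarith, ?_⟩
              intro k' hk' hne
              have h' : k' < k := by omega
              exact E1 k hk k' h' _ (by linarith)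
        refine ⟨(x₁, fE (bb k) x₁), (x₂, fE (bb k) x₂), ?_,
          contrib_pt x₁ hgood₁.1 hgood₁.2, contrib_pt x₂ hgood₂.1 hgood₂.2⟩
        intro h
        exact hx12 (congrArg Prod.fst h)
      · -- the line L
        rw [heq]
        have contrib_pt : ∀ x : ℝ, xq < x → (x, fE L x) ∈ closure P ∩ lineSet L := by
          intro x hxq
          constructor
          · have hδ : 0 < fE L x - Mx x := by
              have := hMx_lt x hxq
              linarith
            refine mem_closure_down hδ ?_
            intro t ht1 ht2
            rw [hPmem]
            constructor
            · intro k' hk'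
              have := hMx_ge x k' hk'
              simp only []
              linarith
            · simp only []
              linarith
          · simp only [lineSet, Set.mem_setOf_eq, fE]
        refine ⟨(xq + 1, fE L (xq + 1)), (xq + 2, fE L (xq + 2)), ?_,
          contrib_pt _ (by linarith), contrib_pt _ (by linarith)⟩
        intro h
        have := congrArg Prod.fst h
        simp only [] at this
        linarith
  -- conclusion
  have hainj : Function.Injective a := by
    intro i j h
    exact hmono.injective (congrArg Prod.fst h)
  have hacinj : Function.Injective (a ∘ c) := hainj.comp hc.injective
  have hnotmem : a ⟨N - 1, hNlt⟩ ∉ Finset.univ.image (a ∘ c) := by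
    intro h
    rw [Finset.mem_image] at h
    obtain ⟨i, -, hi⟩ := h
    have hlt : ((a ∘ c) i).1 < (a ⟨N - 1, hNlt⟩).1 :=
      hmono (Fin.lt_def.mpr (by simpa using hclt i))
    rw [hi] at hlt
    exact lt_irrefl _ hlt
  constructor
  · rw [Finset.card_union_of_disjoint (Finset.disjoint_singleton_right.mpr hnotmem)]
    rw [Finset.card_image_of_injective _ hacinj]
    simp
  · refine ⟨P, key _ ?_⟩
    intro l
    rw [Finset.mem_union, Finset.mem_image, Finset.mem_singleton, ← hLdef]
    constructor
    · rintro (⟨i, -, rfl⟩ | rfl)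
      · exact Or.inl ⟨i.1, i.2, by rw [hbbdef i.1 i.2]; rfl⟩
      · exact Or.inr rfl
    · rintro (⟨k, hk, rfl⟩ | rfl)
      · exact Or.inl ⟨⟨k, hk⟩, Finset.mem_univ _, (hbbdef k hk).symm⟩
      · exact Or.inr rfl
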